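/- For every natural number n ≥ 1 and every α ∈ ℝ, the complex integrals I_n(α) = ∫_ℝ x^n · exp(−x²/2 + i·α·x³) dx satisfy the recursion I_n(α) = (n−1)·I_{n−2}(α) + 3·i·α·I_{n+1}(α), where I_{−1} is interpreted as 0 (so for n = 1: I_1(α) = 3·i·α·I_2(α)). -/

import Mathlib

open MeasureTheory

/-- The auxiliary integrals `I_n(α) = ∫ xⁿ exp(-x²/2 + iαx³) dx`. -/
noncomputable def cubicIn (n : ℕ) (α : ℝ) : ℂ :=
  ∫ x : ℝ, (x : ℂ) ^ n * Complex.exp (-(x : ℂ) ^ 2 / 2 + Complex.I * α * (x : ℂ) ^ 3)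

open Real Filter Complex

noncomputable def E (α : ℝ) (x : ℝ) : ℂ :=
  Complex.exp (-(x : ℂ) ^ 2 / 2 + Complex.I * α * (x : ℂ) ^ 3)

lemma norm_E (α : ℝ) (x : ℝ) : ‖E α x‖ = Real.exp (-(1/2) * x ^ 2) := by
  rw [E, show -(x:ℂ)^2/2 + Complex.I*α*(x:ℂ)^3 = ((-(1/2)*x^2 : ℝ) : ℂ) + (α*x^3 : ℝ)*Complex.I by
    push_cast; ring]
  rw [Complex.norm_exp]
  simp [← Complex.ofReal_pow, Complex.add_re, Complex.mul_I_re]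

lemma norm_cE (k : ℕ) (α : ℝ) (x : ℝ) :
    ‖(x:ℂ)^k * E α x‖ = |x|^k * Real.exp (-(1/2) * x ^ 2) := by
  rw [norm_mul, norm_pow, Complex.norm_real, Real.norm_eq_abs, norm_E]

lemma integrable_abs_pow_exp (k : ℕ) :
    Integrable fun x : ℝ => |x| ^ k * Real.exp (-(1/2) * x ^ 2) := by
  have h := (integrable_rpow_mul_exp_neg_mul_sq (by norm_num : (0:ℝ) < 1/2)
    (s := k) (by exact_mod_cast neg_one_lt_zero.trans_le (Nat.cast_nonneg k))).abs
  refine h.congr (ae_of_all _ fun x => ?_)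
  simp only [Real.rpow_natCast, abs_mul, abs_of_pos (Real.exp_pos _)]
  rw [_root_.abs_pow]

lemma cont_cE (k : ℕ) (α : ℝ) : Continuous fun x : ℝ => (x:ℂ)^k * E α x := by
  unfold E; fun_prop

lemma integrable_cE (k : ℕ) (α : ℝ) : Integrable fun x : ℝ => (x:ℂ)^k * E α x := by
  refine (integrable_abs_pow_exp k).mono' (cont_cE k α).aestronglyMeasurable
    (ae_of_all _ fun x => ?_)
  rw [norm_cE]

lemma tendsto_cE_atTop (k : ℕ) (α : ℝ) :
    Tendsto (fun x : ℝ => (x:ℂ)^k * E α x) atTop (nhds 0) ∧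
    Tendsto (fun x : ℝ => (x:ℂ)^k * E α x) atBot (nhds 0) := by
  have hg : Tendsto (fun t : ℝ => t ^ k * Real.exp (-(1/2) * t ^ 2)) atTop (nhds 0) := by
    have h := rpow_mul_exp_neg_mul_sq_isLittleO_exp_neg (by norm_num : (0:ℝ) < 1/2) k
    have h2 : Tendsto (fun x : ℝ => Real.exp (-(1/2) * x)) atTop (nhds 0) := by
      apply Real.tendsto_exp_atBot.comp
      exact (tendsto_const_mul_atBot_of_neg (by norm_num)).mpr tendsto_id
    have := h.tendsto_zero_of_tendsto h2
    refine this.congr' ?_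
    filter_upwards [eventually_ge_atTop (0:ℝ)] with x hx
    rw [Real.rpow_natCast]
  have key : ∀ l : Filter ℝ, Tendsto (fun x : ℝ => |x|) l atTop →
      Tendsto (fun x : ℝ => (x:ℂ)^k * E α x) l (nhds 0) := by
    intro l hl
    rw [tendsto_zero_iff_norm_tendsto_zero]
    have : (fun x : ℝ => ‖(x:ℂ)^k * E α x‖) =
        (fun t : ℝ => t ^ k * Real.exp (-(1/2) * t ^ 2)) ∘ fun x => |x| := by
      funext x
      simp only [Function.comp_apply]
      rw [norm_cE, _root_.sq_abs]
    rw [this]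
    exact hg.comp hl
  exact ⟨key _ (tendsto_abs_atTop_atTop), key _ tendsto_abs_atBot_atTop⟩

lemma hasDerivAt_E (α : ℝ) (x : ℝ) :
    HasDerivAt (E α) ((-(x:ℂ) + 3 * Complex.I * α * (x:ℂ)^2) * E α x) x := by
  have hp : HasDerivAt (fun z : ℂ => -z^2/2 + Complex.I*α*z^3)
      (-(x:ℂ) + 3 * Complex.I * α * (x:ℂ)^2) (x:ℝ) := by
    have h1 := ((hasDerivAt_pow 2 (x:ℂ)).neg).div_const 2
    have h2 := (hasDerivAt_pow 3 (x:ℂ)).const_mul (Complex.I * α)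
    have := h1.add h2
    exact this.congr_deriv (by push_cast; ring)
  unfold E
  have h := (hp.comp_ofReal).cexp
  convert h using 1
  ring

theorem my (n : ℕ) (hn : 1 ≤ n) (α : ℝ) :
    (∫ x : ℝ, (x:ℂ)^n * E α x) =
      ((n : ℂ) - 1) * (∫ x : ℝ, (x:ℂ)^(n-2) * E α x)
        + 3 * Complex.I * α * (∫ x : ℝ, (x:ℂ)^(n+1) * E α x) := by
  obtain ⟨m, rfl⟩ : ∃ m, n = m + 1 := ⟨n - 1, (Nat.succ_pred_eq_of_pos hn).symm⟩
  set F : ℝ → ℂ := fun x => (x:ℂ)^m * E α x with hF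
  set F' : ℝ → ℂ := fun x => (m:ℂ) * ((x:ℂ)^(m-1) * E α x)
      - (x:ℂ)^(m+1) * E α x + 3 * Complex.I * α * ((x:ℂ)^(m+2) * E α x) with hF'
  have hder : ∀ x : ℝ, HasDerivAt F (F' x) x := by
    intro x
    have h1 : HasDerivAt (fun y : ℝ => ((y:ℂ))^m) ((m:ℂ) * (x:ℂ)^(m-1)) x :=
      (hasDerivAt_pow m (x:ℂ)).comp_ofReal
    have := h1.mul (hasDerivAt_E α x)
    exact this.congr_deriv (by rw [hF']; ring)
  have hint : Integrable F' := by
    exact ((((integrable_cE (m-1) α).const_mul _).sub (integrable_cE (m+1) α)).add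
      ((integrable_cE (m+2) α).const_mul _))
  have htop : Tendsto F atTop (nhds 0) := (tendsto_cE_atTop m α).1
  have hbot : Tendsto F atBot (nhds 0) := (tendsto_cE_atTop m α).2
  have hIoi : ∫ x in Set.Ioi (0:ℝ), F' x = 0 - F 0 :=
    integral_Ioi_of_hasDerivAt_of_tendsto' (fun x _ => hder x) hint.integrableOn htop
  have hIic : ∫ x in Set.Iic (0:ℝ), F' x = F 0 - 0 :=
    integral_Iic_of_hasDerivAt_of_tendsto' (fun x _ => hder x) hint.integrableOn hbot
  have hzero : ∫ x : ℝ, F' x = 0 := by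
    rw [← intervalIntegral.integral_Iic_add_Ioi hint.integrableOn hint.integrableOn, hIoi, hIic]; ring
  have hexp : ∫ x : ℝ, F' x = (m:ℂ) * (∫ x : ℝ, (x:ℂ)^(m-1) * E α x)
      - (∫ x : ℝ, (x:ℂ)^(m+1) * E α x)
      + 3 * Complex.I * α * (∫ x : ℝ, (x:ℂ)^(m+2) * E α x) := by
    have hA : Integrable (fun x : ℝ =>
        (m:ℂ) * ((x:ℂ)^(m-1) * E α x) - (x:ℂ)^(m+1) * E α x) :=
      ((integrable_cE (m-1) α).const_mul _).sub (integrable_cE (m+1) α)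
    have hB : Integrable (fun x : ℝ => 3*Complex.I*(α:ℂ) * ((x:ℂ)^(m+2) * E α x)) :=
      (integrable_cE (m+2) α).const_mul _
    rw [hF', integral_add hA hB,
      integral_sub ((integrable_cE (m-1) α).const_mul _) (integrable_cE (m+1) α),
      integral_const_mul, integral_const_mul]
  rw [hexp] at hzero
  have hm : (m + 1 - 2 : ℕ) = m - 1 := by omega
  have hc : ((m + 1 : ℕ) : ℂ) - 1 = (m : ℂ) := by push_cast; ring
  rw [hm, hc]
  have := hzero
  linear_combination -this

theorem cubicIn_recursion (n : ℕ) (hn : 1 ≤ n) (α : ℝ) :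
    cubicIn n α =
      ((n : ℂ) - 1) * cubicIn (n - 2) α + 3 * Complex.I * α * cubicIn (n + 1) α := by
  have := my n hn α
  simpa [cubicIn, E] using this
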